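/- Let X_1, …, X_n be a martingale difference sequence with respect to a filtration F = (F_i)_{0 ≤ i ≤ n}, with |X_i| ≤ K almost surely for all i. Let S_i = X_1 + ⋯ + X_i and let Σ_n² = Σ_{t=1}^n E[X_t² | F_{t−1}]. Then for all t > 0 and ν > 0, P( max_{i=1,…,n} S_i > √(2νt) + (√2/3) K t and Σ_n² ≤ ν ) ≤ e^{−t}. -/

import Mathlib

open MeasureTheory Finset

section Aux
open Real Set

lemma nonneg_of_deriv (f : ℝ → ℝ) (hc : Continuous f) (h0 : f 0 = 0)
    (hd : ∀ x ∈ interior (Ici (0:ℝ)), 0 ≤ deriv f x)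
    (hdiff : DifferentiableOn ℝ f (interior (Ici (0:ℝ)))) :
    ∀ x, 0 ≤ x → 0 ≤ f x := by
  intro x hx
  have := monotoneOn_of_deriv_nonneg (convex_Ici 0) hc.continuousOn hdiff hd
  have := this (self_mem_Ici) (mem_Ici.mpr hx) hx
  simpa [h0] using this

lemma hdA1 (x : ℝ) : HasDerivAt (fun u : ℝ => (u - 1) * Real.exp u + 1)
    (x * Real.exp x) x := by
  have := (((hasDerivAt_id x).sub_const 1).mul (Real.hasDerivAt_exp x)).add_const 1
  refine this.congr_deriv ?_
  first
        | (simp only [id_eq]; ring)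
        | ring

lemma lemA1 : ∀ u : ℝ, 0 ≤ u → 0 ≤ (u - 1) * Real.exp u + 1 := by
  apply nonneg_of_deriv
  · continuity
  · simp
  · intro x hx
    rw [interior_Ici] at hx
    rw [(hdA1 x).deriv]
    exact mul_nonneg (le_of_lt hx) (Real.exp_pos x).le
  · exact fun x _ => (hdA1 x).differentiableAt.differentiableWithinAt

-- χ : u(e^u - 1) - 2(e^u - 1 - u) ≥ 0 for u ≥ 0
lemma hdA2 (x : ℝ) : HasDerivAt (fun u : ℝ => u * (Real.exp u - 1) - 2 * (Real.exp u - 1 - u))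
    ((x - 1) * Real.exp x + 1) x := by
  have h1 := (hasDerivAt_id x).mul ((Real.hasDerivAt_exp x).sub_const 1)
  have h2 := (((Real.hasDerivAt_exp x).sub_const 1).sub (hasDerivAt_id x)).const_mul (2:ℝ)
  have := h1.sub h2
  refine this.congr_deriv ?_
  first
        | (simp only [id_eq]; ring)
        | ring

lemma lemA2 : ∀ u : ℝ, 0 ≤ u → 2 * (Real.exp u - 1 - u) ≤ u * (Real.exp u - 1) := by
  have h := nonneg_of_deriv (fun u : ℝ => u * (Real.exp u - 1) - 2 * (Real.exp u - 1 - u))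
    (by continuity) (by simp)
    (fun x hx => by rw [interior_Ici] at hx; rw [(hdA2 x).deriv]; exact lemA1 x hx.le)
    (fun x _ => (hdA2 x).differentiableAt.differentiableWithinAt)
  intro u hu; have := h u hu; linarith

-- h(u) ≥ u²/2 for u ≥ 0
lemma lemA4 : ∀ u : ℝ, 0 ≤ u → u ^ 2 / 2 ≤ Real.exp u - 1 - u := by
  have h := nonneg_of_deriv (fun u : ℝ => Real.exp u - 1 - u - u ^ 2 / 2)
    (by continuity) (by simp)
    (fun x hx => by
      rw [interior_Ici] at hx
      have hd : HasDerivAt (fun u : ℝ => Real.exp u - 1 - u - u ^ 2 / 2)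
          (Real.exp x - 1 - x) x := by
        have := (((Real.hasDerivAt_exp x).sub_const 1).sub (hasDerivAt_id x)).sub
          ((hasDerivAt_pow 2 x).div_const 2)
        refine this.congr_deriv ?_
        first
        | (simp only [id_eq]; ring)
        | ring
      rw [hd.deriv]
      nlinarith [Real.add_one_le_exp x])
    (fun x _ => (((((Real.hasDerivAt_exp x).sub_const 1).sub (hasDerivAt_id x)).sub
          ((hasDerivAt_pow 2 x).div_const 2))).differentiableAt.differentiableWithinAt)
  intro u hu; linarith [h u hu]

-- e^y ≤ 1 + y + y²/2 for y ≤ 0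
lemma lemNeg : ∀ y : ℝ, y ≤ 0 → Real.exp y ≤ 1 + y + y ^ 2 / 2 := by
  intro y hy
  have hd : ∀ x : ℝ, HasDerivAt (fun u : ℝ => 1 + u + u ^ 2 / 2 - Real.exp u)
      (1 + x - Real.exp x) x := by
    intro x
    have := (((hasDerivAt_const x (1:ℝ)).add (hasDerivAt_id x)).add
      ((hasDerivAt_pow 2 x).div_const 2)).sub (Real.hasDerivAt_exp x)
    refine this.congr_deriv ?_
    first
        | (simp only [id_eq]; ring)
        | ring
  have hanti : AntitoneOn (fun u : ℝ => 1 + u + u ^ 2 / 2 - Real.exp u) (Iic 0) := by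
    apply antitoneOn_of_deriv_nonpos (convex_Iic 0)
    · exact Continuous.continuousOn (by continuity)
    · exact fun x _ => (hd x).differentiableAt.differentiableWithinAt
    · intro x _
      rw [(hd x).deriv]
      linarith [Real.add_one_le_exp x]
  have := hanti (mem_Iic.mpr hy) (mem_Iic.mpr le_rfl) hy
  simp only [] at this
  simp at this
  linarith

-- g(u) = (e^u - 1 - u)/u² is monotone on (0,∞)
lemma lemGmono : ∀ v u : ℝ, 0 < v → v ≤ u →
    (Real.exp v - 1 - v) * u ^ 2 ≤ (Real.exp u - 1 - u) * v ^ 2 := by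
  have hd : ∀ x : ℝ, x ∈ Ioi (0:ℝ) → HasDerivAt (fun u : ℝ => (Real.exp u - 1 - u) / u ^ 2)
      ((x * (Real.exp x - 1) - 2 * (Real.exp x - 1 - x)) / x ^ 3) x := by
    intro x hx
    have hx0 : (x:ℝ) ≠ 0 := ne_of_gt hx
    have h1 := ((Real.hasDerivAt_exp x).sub_const 1).sub (hasDerivAt_id x)
    have h2 := hasDerivAt_pow 2 x
    have hx' : (0:ℝ) < x := hx
    have := h1.div h2 (pow_ne_zero 2 (ne_of_gt hx'))
    refine this.congr_deriv ?_
    simp only [Pi.sub_apply, id_eq]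
    field_simp
    ring
  have hmono : MonotoneOn (fun u : ℝ => (Real.exp u - 1 - u) / u ^ 2) (Ioi 0) := by
    apply monotoneOn_of_deriv_nonneg (convex_Ioi 0)
    · apply ContinuousOn.div
      · exact Continuous.continuousOn (by continuity)
      · exact Continuous.continuousOn (by continuity)
      · intro x hx; exact pow_ne_zero 2 (ne_of_gt hx)
    · rw [interior_Ioi]
      exact fun x hx => (hd x hx).differentiableAt.differentiableWithinAt
    · rw [interior_Ioi]
      intro x hx
      rw [(hd x hx).deriv]
      have hx' : (0:ℝ) < x := hx
      apply div_nonneg _ (by positivity)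
      have := lemA2 x (le_of_lt hx)
      linarith
  intro v u hv hvu
  have hu : (0:ℝ) < u := lt_of_lt_of_le hv hvu
  have := hmono (mem_Ioi.mpr hv) (mem_Ioi.mpr hu) hvu
  rw [div_le_div_iff₀ (by positivity) (by positivity)] at this
  linarith

-- pointwise mgf bound: for |y| ≤ u, e^y ≤ 1 + y + ((e^u-1-u)/u²) y²
lemma lemA5 (u : ℝ) (hu : 0 < u) (y : ℝ) (hy : |y| ≤ u) :
    Real.exp y ≤ 1 + y + (Real.exp u - 1 - u) / u ^ 2 * y ^ 2 := by
  rcases le_or_gt y 0 with h | h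
  · have h1 := lemNeg y h
    have h2 := lemA4 u hu.le
    have h3 : 1 / 2 ≤ (Real.exp u - 1 - u) / u ^ 2 := by
      rw [le_div_iff₀ (by positivity)]; linarith
    have : y ^ 2 / 2 ≤ (Real.exp u - 1 - u) / u ^ 2 * y ^ 2 := by
      nlinarith [sq_nonneg y]
    linarith
  · have hyu : y ≤ u := le_trans (le_abs_self y) hy
    have := lemGmono y u h hyu
    have h2 : Real.exp y - 1 - y ≤ (Real.exp u - 1 - u) / u ^ 2 * y ^ 2 := by
      rw [div_mul_eq_mul_div, le_div_iff₀ (by positivity)]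
      linarith
    linarith

-- L1 : (3-y)(e^y -1-y) ≤ (3/2) y² for y ≥ 0
lemma lemChi2 : ∀ y : ℝ, 0 ≤ y → 0 ≤ (y - 2) * Real.exp y + y + 2 := by
  have hd : ∀ x : ℝ, HasDerivAt (fun u : ℝ => (u - 2) * Real.exp u + u + 2)
      ((x - 1) * Real.exp x + 1) x := by
    intro x
    have := ((((hasDerivAt_id x).sub_const 2).mul (Real.hasDerivAt_exp x)).add
      (hasDerivAt_id x)).add_const 2
    refine this.congr_deriv ?_
    simp only [id_eq]; ring
  have := nonneg_of_deriv (fun u : ℝ => (u - 2) * Real.exp u + u + 2)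
    (by continuity) (by norm_num)
    (fun x hx => by rw [interior_Ici] at hx; rw [(hd x).deriv]; exact lemA1 x hx.le)
    (fun x _ => (hd x).differentiableAt.differentiableWithinAt)
  intro y hy; have := this y hy; simpa using this

lemma lemL1 : ∀ y : ℝ, 0 ≤ y → (3 - y) * (Real.exp y - 1 - y) ≤ 3 / 2 * y ^ 2 := by
  have hd : ∀ x : ℝ, HasDerivAt (fun u : ℝ => 3 / 2 * u ^ 2 - (3 - u) * (Real.exp u - 1 - u))
      ((x - 2) * Real.exp x + x + 2) x := by
    intro x
    have h1 := (hasDerivAt_pow 2 x).const_mul (3/2 : ℝ)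
    have h2 := ((hasDerivAt_const x (3:ℝ)).sub (hasDerivAt_id x)).mul
      (((Real.hasDerivAt_exp x).sub_const 1).sub (hasDerivAt_id x))
    have := h1.sub h2
    refine this.congr_deriv ?_
    simp only [Pi.sub_apply, id_eq]; ring
  have := nonneg_of_deriv (fun u : ℝ => 3 / 2 * u ^ 2 - (3 - u) * (Real.exp u - 1 - u))
    (by continuity) (by simp)
    (fun x hx => by rw [interior_Ici] at hx; rw [(hd x).deriv]; exact lemChi2 x hx.le)
    (fun x _ => (hd x).differentiableAt.differentiableWithinAt)
  intro y hy; have := this y hy; linarith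


lemma lemL2 : ∀ a : ℝ, 0 ≤ a →
    a ≤ (1 + Real.sqrt 2 / 3 * a) * Real.log (1 + a + Real.sqrt 2 / 6 * a ^ 2) := by
  intro a ha
  set c : ℝ := Real.sqrt 2 / 3 with hc
  have hs2 : Real.sqrt 2 ^ 2 = 2 := Real.sq_sqrt (by norm_num)
  have hs1 : 1 ≤ Real.sqrt 2 := by nlinarith [Real.sqrt_nonneg 2]
  have hc0 : 0 < c := by rw [hc]; positivity
  have hc2 : c ^ 2 = 2 / 9 := by rw [hc]; rw [div_pow, hs2]; norm_num
  have hd : 0 < 1 + c * a := by nlinarith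
  set w : ℝ := a / (1 + c * a) with hwdef
  have hw0 : 0 ≤ w := by positivity
  have hwd : w * (1 + c * a) = a := by
    rw [hwdef]; field_simp
  have hw3 : w < 3 := by
    rw [hwdef, div_lt_iff₀ hd]
    nlinarith
  have h3w : 0 < 3 - w := by linarith
  have hL1 := lemL1 w hw0
  have key : (3 - w) * (1 + w) + 3 / 2 * w ^ 2 ≤ (3 - w) * (1 + a + c / 2 * a ^ 2) := by
    nlinarith [hwd, mul_nonneg ha hw0, mul_nonneg (mul_nonneg ha ha) hw0,
      mul_nonneg hc0.le ha, sq_nonneg a, sq_nonneg w, mul_nonneg (mul_nonneg hc0.le ha) hw0,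
      mul_pos hd hd, mul_nonneg (mul_nonneg (mul_nonneg hc0.le hc0.le) ha) ha,
      mul_nonneg (mul_nonneg (mul_nonneg hc0.le ha) ha) hw0]
  have h5 : (3 - w) * Real.exp w ≤ (3 - w) * (1 + a + c / 2 * a ^ 2) := by nlinarith [hL1]
  have hexp : Real.exp w ≤ 1 + a + c / 2 * a ^ 2 := by
    exact le_of_mul_le_mul_left h5 h3w
  have hpos : (0:ℝ) < 1 + a + c / 2 * a ^ 2 := by nlinarith [mul_nonneg hc0.le (sq_nonneg a)]
  have hlog : w ≤ Real.log (1 + a + c / 2 * a ^ 2) := by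
    rw [Real.le_log_iff_exp_le hpos]; exact hexp
  have hgoal : a ≤ (1 + c * a) * Real.log (1 + a + c / 2 * a ^ 2) := by
    calc a = w * (1 + c * a) := hwd.symm
    _ ≤ Real.log (1 + a + c / 2 * a ^ 2) * (1 + c * a) :=
        mul_le_mul_of_nonneg_right hlog hd.le
    _ = (1 + c * a) * Real.log (1 + a + c / 2 * a ^ 2) := by ring
  have e1 : Real.sqrt 2 / 6 * a ^ 2 = c / 2 * a ^ 2 := by rw [hc]; ring
  rw [e1]
  exact hgoal

lemma lemL3 : ∀ a : ℝ, 0 ≤ a →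
    a ^ 2 / 2 + (a + Real.sqrt 2 / 6 * a ^ 2) ≤
      (1 + a + Real.sqrt 2 / 6 * a ^ 2) * Real.log (1 + a + Real.sqrt 2 / 6 * a ^ 2) := by
  have hs0 : (0:ℝ) ≤ Real.sqrt 2 := Real.sqrt_nonneg 2
  have hBpos : ∀ x : ℝ, 0 ≤ x → (0:ℝ) < 1 + x + Real.sqrt 2 / 6 * x ^ 2 := by
    intro x hx; nlinarith [mul_nonneg hs0 (sq_nonneg x)]
  have hB : ∀ x : ℝ, HasDerivAt (fun x : ℝ => 1 + x + Real.sqrt 2 / 6 * x ^ 2)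
      (1 + Real.sqrt 2 / 3 * x) x := by
    intro x
    have := ((hasDerivAt_id x).add ((hasDerivAt_pow 2 x).const_mul (Real.sqrt 2 / 6))).const_add 1
    convert this using 1
    · rfl
    · rfl
    · funext y; simp only [Pi.add_apply, id_eq]; ring
    · norm_num; ring
  have hf : ∀ x : ℝ, 0 ≤ x → HasDerivAt
      (fun x : ℝ => (1 + x + Real.sqrt 2 / 6 * x ^ 2) *
        Real.log (1 + x + Real.sqrt 2 / 6 * x ^ 2) - (x + Real.sqrt 2 / 6 * x ^ 2) - x ^ 2 / 2)
      ((1 + Real.sqrt 2 / 3 * x) * Real.log (1 + x + Real.sqrt 2 / 6 * x ^ 2) - x) x := by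
    intro x hx
    have hpos := hBpos x hx
    have hlog : HasDerivAt (fun x : ℝ => Real.log (1 + x + Real.sqrt 2 / 6 * x ^ 2))
        ((1 + Real.sqrt 2 / 3 * x) / (1 + x + Real.sqrt 2 / 6 * x ^ 2)) x :=
      (hB x).log (ne_of_gt hpos)
    have h1 := (hB x).mul hlog
    have h2 := (h1.sub ((hB x).sub_const 1)).sub ((hasDerivAt_pow 2 x).div_const 2)
    convert h2 using 1
    · rfl
    · rfl
    · funext y; simp only [Pi.sub_apply, Pi.mul_apply]; ring
    · field_simp
      ring
  have hmono : MonotoneOn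
      (fun x : ℝ => (1 + x + Real.sqrt 2 / 6 * x ^ 2) *
        Real.log (1 + x + Real.sqrt 2 / 6 * x ^ 2) - (x + Real.sqrt 2 / 6 * x ^ 2) - x ^ 2 / 2)
      (Ici 0) := by
    apply monotoneOn_of_deriv_nonneg (convex_Ici 0)
    · apply ContinuousOn.sub
      apply ContinuousOn.sub
      · apply ContinuousOn.mul
        · exact Continuous.continuousOn (by continuity)
        · apply ContinuousOn.log
          · exact Continuous.continuousOn (by continuity)
          · intro x hx; exact ne_of_gt (hBpos x hx)
      · exact Continuous.continuousOn (by continuity)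
      · exact Continuous.continuousOn (by continuity)
    · rw [interior_Ici]
      exact fun x hx => (hf x (le_of_lt hx)).differentiableAt.differentiableWithinAt
    · rw [interior_Ici]
      intro x hx
      rw [(hf x (le_of_lt hx)).deriv]
      have := lemL2 x (le_of_lt hx)
      linarith
  intro a ha
  have := hmono (self_mem_Ici) (mem_Ici.mpr ha) ha
  simp only [Real.log_one, ne_eq, OfNat.ofNat_ne_zero, not_false_eq_true, zero_pow,
    mul_zero, add_zero, mul_one] at this
  norm_num at this
  linarith

/-- Master scalar lemma: choice of `s` making the Chernoff bound work. -/
lemma master (K t ν : ℝ) (hK : 0 < K) (ht : 0 < t) (hν : 0 < ν) :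
    ∃ s : ℝ, 0 < s ∧
      t + (Real.exp (s * K) - 1 - s * K) / K ^ 2 * ν ≤
        s * (Real.sqrt (2 * ν * t) + Real.sqrt 2 / 3 * K * t) := by
  set a : ℝ := K * Real.sqrt (2 * t / ν) with hadef
  have h2tν : (0:ℝ) < 2 * t / ν := by positivity
  have ha : 0 < a := by
    rw [hadef]; exact mul_pos hK (Real.sqrt_pos.mpr h2tν)
  set b : ℝ := a + Real.sqrt 2 / 6 * a ^ 2 with hbdef
  have hs0 : (0:ℝ) ≤ Real.sqrt 2 := Real.sqrt_nonneg 2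
  have hb : 0 < b := by
    rw [hbdef]; nlinarith [mul_nonneg hs0 (sq_nonneg a)]
  have hb1 : (0:ℝ) < 1 + b := by linarith
  refine ⟨Real.log (1 + b) / K, ?_, ?_⟩
  · apply div_pos _ hK
    exact Real.log_pos (by linarith)
  · have hsK : Real.log (1 + b) / K * K = Real.log (1 + b) := by field_simp
    rw [hsK, Real.exp_log hb1]
    have ha2 : a ^ 2 = K ^ 2 * (2 * t / ν) := by
      rw [hadef, mul_pow, Real.sq_sqrt h2tν.le]
    have hsqrt : Real.sqrt (2 * ν * t) = a * ν / K := by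
      have h1 : 2 * ν * t = (a * ν / K) ^ 2 := by
        field_simp
        rw [ha2]; field_simp
      rw [h1, Real.sqrt_sq (by positivity)]
    have hL3 := lemL3 a ha.le
    have hbb : (1:ℝ) + b = 1 + a + Real.sqrt 2 / 6 * a ^ 2 := by rw [hbdef]; ring
    rw [← hbb] at hL3
    have ht' : t = a ^ 2 * ν / (2 * K ^ 2) := by
      rw [ha2]; field_simp
    rw [hsqrt]
    set L : ℝ := Real.log (1 + b) with hLdef
    have hL : 0 < L := Real.log_pos (by linarith)
    -- goal: t + (1 + b - 1 - L)/K^2 * ν ≤ L/K * (a*ν/K + √2/3*K*t)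
    -- i.e. t + (b - L)*ν/K² ≤ L*a*ν/K² + L*√2/3*t
    -- using t = a²ν/(2K²), multiply by K²/ν: a²/2 + (b-L) ≤ L*a + L*√2/6*a² = L*b
    -- which is hL3 : a²/2 + b ≤ (1+b)*L = L + L*b.
    rw [ht']
    have hL3' : a ^ 2 / 2 + b ≤ (1 + b) * L := by rw [hLdef]; linarith [hL3]
    have key : (a ^ 2 / 2 + b) * (ν / K ^ 2) ≤ ((1 + b) * L) * (ν / K ^ 2) :=
      mul_le_mul_of_nonneg_right hL3' (by positivity)
    have e1 : L / K * (a * ν / K + Real.sqrt 2 / 3 * K * (a ^ 2 * ν / (2 * K ^ 2))) =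
        L * (ν / K ^ 2) + (L * b) * (ν / K ^ 2) - L * (ν / K ^ 2) := by
      rw [hbdef]; field_simp; ring
    have e2 : a ^ 2 * ν / (2 * K ^ 2) + (1 + b - 1 - L) / K ^ 2 * ν =
        (a ^ 2 / 2 + b) * (ν / K ^ 2) - L * (ν / K ^ 2) := by
      field_simp; ring
    rw [e1, e2]
    nlinarith [key]

end Aux

/-- Bernstein's inequality for martingales (second form): for a martingale
difference sequence `X_1, …, X_n` w.r.t. the filtration `ℱ` with `|X_i| ≤ K` a.s.,
writing `S_i = X_1 + ⋯ + X_i` and `Σ_n² = ∑_{t=1}^n E[X_t² | ℱ_{t−1}]`,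
`P(max_{1≤i≤n} S_i > √(2νt) + (√2/3)Kt ∧ Σ_n² ≤ ν) ≤ e^{−t}`. -/
theorem bernstein_martingale' {Ω : Type*} [m0 : MeasurableSpace Ω]
    (μ : Measure Ω) [IsProbabilityMeasure μ]
    (n : ℕ) (hn : 1 ≤ n) (ℱ : Filtration ℕ m0)
    (X : ℕ → Ω → ℝ) (K : ℝ) (hK : 0 < K)
    (hadp : ∀ i ∈ Icc 1 n, StronglyMeasurable[ℱ i] (X i))
    (hmd : ∀ i ∈ Icc 1 n, μ[X i | ℱ (i - 1)] =ᵐ[μ] 0)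
    (hbdd : ∀ i ∈ Icc 1 n, ∀ᵐ ω ∂μ, |X i ω| ≤ K)
    (t ν : ℝ) (ht : 0 < t) (hν : 0 < ν) :
    μ {ω | ((Icc 1 n).sup' (Finset.nonempty_Icc.mpr hn)
          fun i => ∑ j ∈ Icc 1 i, X j ω) >
            Real.sqrt (2 * ν * t) + Real.sqrt 2 / 3 * K * t ∧
        (∑ s ∈ Icc 1 n, (μ[(fun ω' => (X s ω') ^ 2) | ℱ (s - 1)]) ω) ≤ ν} ≤
      ENNReal.ofReal (Real.exp (-t)) := by
  obtain ⟨s, hs, hmaster⟩ := master K t ν hK ht hν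
  set φ : ℝ := (Real.exp (s * K) - 1 - s * K) / K ^ 2 with hφdef
  have hφ0 : 0 ≤ φ := by
    apply div_nonneg _ (sq_nonneg K)
    nlinarith [Real.add_one_le_exp (s * K)]
  set lam : ℝ := Real.sqrt (2 * ν * t) + Real.sqrt 2 / 3 * K * t with hlamdef
  set V : ℕ → Ω → ℝ := fun j => μ[(fun ω' => (X j ω') ^ 2) | ℱ (j - 1)] with hVdef
  set f : ℕ → Ω → ℝ := fun i ω =>
    Real.exp (s * (∑ j ∈ Icc 1 (min i n), X j ω) - φ * (∑ j ∈ Icc 1 (min i n), V j ω))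
    with hfdef
  -- measurability of partial sums
  have hSmeas : ∀ i : ℕ, StronglyMeasurable[ℱ i] (fun ω => ∑ j ∈ Icc 1 (min i n), X j ω) := by
    intro i
    apply Finset.stronglyMeasurable_fun_sum
    intro j hj
    rw [Finset.mem_Icc] at hj
    exact (hadp j (Finset.mem_Icc.mpr ⟨hj.1, le_trans hj.2 (min_le_right i n)⟩)).mono
      (ℱ.mono (le_trans hj.2 (min_le_left i n)))
  have hVmeas : ∀ j i : ℕ, j - 1 ≤ i → StronglyMeasurable[ℱ i] (V j) := by
    intro j i hji
    exact stronglyMeasurable_condExp.mono (ℱ.mono hji)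
  have hQmeas : ∀ i : ℕ, StronglyMeasurable[ℱ i] (fun ω => ∑ j ∈ Icc 1 (min i n), V j ω) := by
    intro i
    apply Finset.stronglyMeasurable_fun_sum
    intro j hj
    rw [Finset.mem_Icc] at hj
    exact hVmeas j i (le_trans (Nat.sub_le j 1) (le_trans hj.2 (min_le_left i n)))
  have hfmeas : ∀ i : ℕ, StronglyMeasurable[ℱ i] (f i) := by
    intro i
    exact Real.continuous_exp.comp_stronglyMeasurable
      (((hSmeas i).const_mul s).sub ((hQmeas i).const_mul φ))
  -- a.e. goodness
  have hVnonneg : ∀ j, ∀ᵐ ω ∂μ, 0 ≤ V j ω := by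
    intro j
    exact condExp_nonneg (Filter.Eventually.of_forall fun ω => sq_nonneg _)
  have hgood : ∀ᵐ ω ∂μ, (∀ j ∈ Icc 1 n, |X j ω| ≤ K) ∧ (∀ j : ℕ, j ≤ n → 0 ≤ V j ω) := by
    rw [Filter.eventually_and]
    constructor
    · rw [Filter.eventually_all_finset]
      exact hbdd
    · have : ∀ᵐ ω ∂μ, ∀ j ∈ Finset.range (n+1), 0 ≤ V j ω := by
        rw [Filter.eventually_all_finset]
        exact fun j _ => hVnonneg j
      filter_upwards [this] with ω hω j hj
      exact hω j (Finset.mem_range.mpr (Nat.lt_succ_of_le hj))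
  -- boundedness and integrability of f
  have hfpos : ∀ i ω, 0 < f i ω := fun i ω => Real.exp_pos _
  have hfbdd : ∀ i : ℕ, ∀ᵐ ω ∂μ, f i ω ≤ Real.exp (s * (n * K)) := by
    intro i
    filter_upwards [hgood] with ω hω
    have h1 : (∑ j ∈ Icc 1 (min i n), X j ω) ≤ n * K := by
      calc (∑ j ∈ Icc 1 (min i n), X j ω) ≤ ∑ j ∈ Icc 1 (min i n), K := by
            apply Finset.sum_le_sum
            intro j hj
            rw [Finset.mem_Icc] at hj
            have := hω.1 j (Finset.mem_Icc.mpr ⟨hj.1, le_trans hj.2 (min_le_right i n)⟩)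
            exact le_trans (le_abs_self _) this
      _ = (min i n) * K := by rw [Finset.sum_const, Nat.card_Icc]; simp [nsmul_eq_mul]
      _ ≤ n * K := by
            apply mul_le_mul_of_nonneg_right _ hK.le
            exact_mod_cast Nat.cast_le.mpr (min_le_right i n)
    have h2 : 0 ≤ (∑ j ∈ Icc 1 (min i n), V j ω) := by
      apply Finset.sum_nonneg
      intro j hj
      rw [Finset.mem_Icc] at hj
      exact hω.2 j (le_trans hj.2 (min_le_right i n))
    apply Real.exp_le_exp.mpr
    have := mul_nonneg hφ0 h2
    nlinarith [mul_le_mul_of_nonneg_left h1 hs.le]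
  have hfint : ∀ i : ℕ, Integrable (f i) μ := by
    intro i
    apply Integrable.mono' (integrable_const (Real.exp (s * (n * K))))
      ((hfmeas i).mono (ℱ.le i)).aestronglyMeasurable
    filter_upwards [hfbdd i] with ω hω
    rw [Real.norm_eq_abs, abs_of_pos (hfpos i ω)]
    exact hω
  -- integrability of X i and X i ^ 2
  have hXint : ∀ i ∈ Icc 1 n, Integrable (X i) μ := by
    intro i hi
    apply Integrable.mono' (integrable_const K)
      (((hadp i hi).mono (ℱ.le i)).aestronglyMeasurable)
    filter_upwards [hbdd i hi] with ω hω
    rwa [Real.norm_eq_abs]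
  have hX2int : ∀ i ∈ Icc 1 n, Integrable (fun ω => (X i ω) ^ 2) μ := by
    intro i hi
    apply Integrable.mono' (integrable_const (K ^ 2))
      ((continuous_pow 2).comp_stronglyMeasurable ((hadp i hi).mono (ℱ.le i))).aestronglyMeasurable
    filter_upwards [hbdd i hi] with ω hω
    rw [Real.norm_eq_abs, abs_pow]
    exact pow_le_pow_left₀ (abs_nonneg _) hω 2
  -- the key one-step supermartingale inequality
  have hstep : ∀ i : ℕ, μ[f (i + 1) | ℱ i] ≤ᵐ[μ] f i := by
    intro i
    by_cases hin : i < n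
    · -- the real case
      have hk : i + 1 ∈ Icc 1 n := Finset.mem_Icc.mpr ⟨Nat.le_add_left 1 i, hin⟩
      have hmin1 : min (i + 1) n = i + 1 := min_eq_left hin
      have hmin0 : min i n = i := min_eq_left hin.le
      set G : Ω → ℝ := fun ω => f i ω * Real.exp (-φ * V (i + 1) ω) with hGdef
      set E : Ω → ℝ := fun ω => Real.exp (s * X (i + 1) ω) with hEdef
      have hfsucc : f (i + 1) = fun ω => G ω * E ω := by
        funext ω
        rw [hGdef, hEdef, hfdef]
        simp only [hmin0, hmin1]
        rw [Finset.sum_Icc_succ_top (Nat.le_add_left 1 i),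
          Finset.sum_Icc_succ_top (Nat.le_add_left 1 i)]
        rw [← Real.exp_add, ← Real.exp_add]
        congr 1
        ring
      have hGmeas : StronglyMeasurable[ℱ i] G := by
        apply (hfmeas i).mul
        apply Real.continuous_exp.comp_stronglyMeasurable
        have : StronglyMeasurable[ℱ i] (V (i + 1)) := by
          apply hVmeas (i + 1) i
          simp
        exact this.const_mul _
      have hEint : Integrable E μ := by
        apply Integrable.mono' (integrable_const (Real.exp (s * K)))
          ((Real.continuous_exp.comp_stronglyMeasurable
            (((hadp _ hk).mono (ℱ.le _)).const_mul s)).aestronglyMeasurable)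
        filter_upwards [hbdd _ hk] with ω hω
        rw [Real.norm_eq_abs, abs_of_pos (Real.exp_pos _)]
        apply Real.exp_le_exp.mpr
        calc s * X (i + 1) ω ≤ s * |X (i + 1) ω| :=
              mul_le_mul_of_nonneg_left (le_abs_self _) hs.le
        _ ≤ s * K := mul_le_mul_of_nonneg_left hω hs.le
      have hGEint : Integrable (fun ω => G ω * E ω) μ := by
        rw [← hfsucc]; exact hfint (i + 1)
      have hpull : μ[fun ω => G ω * E ω | ℱ i] =ᵐ[μ] fun ω => G ω * (μ[E | ℱ i]) ω := by
        have := condExp_mul_of_stronglyMeasurable_left (m := ℱ i) (mΩ := m0) (μ := μ)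
          hGmeas (g := E) ?_ hEint
        · exact this
        · exact hGEint
      -- mgf bound
      have hptwise : E ≤ᵐ[μ] fun ω => 1 + s * X (i + 1) ω + φ * (X (i + 1) ω) ^ 2 := by
        filter_upwards [hbdd _ hk] with ω hω
        have hu : 0 < s * K := mul_pos hs hK
        have hy : |s * X (i + 1) ω| ≤ s * K := by
          rw [abs_mul, abs_of_pos hs]
          exact mul_le_mul_of_nonneg_left hω hs.le
        have := lemA5 (s * K) hu (s * X (i + 1) ω) hy
        rw [hEdef]
        calc Real.exp (s * X (i + 1) ω) ≤
            1 + s * X (i + 1) ω + (Real.exp (s*K) - 1 - s*K)/(s*K)^2 * (s * X (i + 1) ω)^2 :=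
              this
        _ = 1 + s * X (i + 1) ω + φ * (X (i + 1) ω) ^ 2 := by
              rw [hφdef]
              field_simp
      have hRHSint : Integrable (fun ω => 1 + s * X (i + 1) ω + φ * (X (i + 1) ω) ^ 2) μ := by
        apply Integrable.add
        apply Integrable.add
        · exact integrable_const 1
        · exact (hXint _ hk).const_mul s
        · exact (hX2int _ hk).const_mul φ
      have hmgf : μ[E | ℱ i] ≤ᵐ[μ] fun ω => 1 + φ * V (i + 1) ω := by
        have h1 : μ[E | ℱ i] ≤ᵐ[μ]
            μ[fun ω => 1 + s * X (i + 1) ω + φ * (X (i + 1) ω) ^ 2 | ℱ i] :=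
          condExp_mono hEint hRHSint hptwise
        have h2 : μ[fun ω => 1 + s * X (i + 1) ω + φ * (X (i + 1) ω) ^ 2 | ℱ i] =ᵐ[μ]
            fun ω => 1 + φ * V (i + 1) ω := by
          have e1 : (fun ω => 1 + s * X (i + 1) ω + φ * (X (i + 1) ω) ^ 2) =
              (fun ω => (1 : ℝ)) + (s • X (i + 1) + φ • fun ω => (X (i + 1) ω) ^ 2) := by
            funext ω; simp [Pi.add_apply]; ring
          rw [e1]
          have hint2 : Integrable (s • X (i + 1) + φ • fun ω => (X (i + 1) ω) ^ 2) μ :=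
            ((hXint _ hk).smul s).add ((hX2int _ hk).smul φ)
          refine (condExp_add (integrable_const 1) hint2 _).trans ?_
          have h3 := condExp_add (μ := μ) (m := ℱ i) ((hXint _ hk).smul s)
            ((hX2int _ hk).smul φ)
          have h4 := condExp_smul (μ := μ) (m := ℱ i) s (X (i + 1))
          have h5 := condExp_smul (μ := μ) (m := ℱ i) φ (fun ω => (X (i + 1) ω) ^ 2)
          have h6 : μ[X (i + 1) | ℱ i] =ᵐ[μ] 0 := by
            have := hmd (i + 1) hk
            simpa using this
          have h7 : μ[fun ω => (X (i + 1) ω) ^ 2 | ℱ i] = V (i + 1) := by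
            rw [hVdef]; simp
          rw [condExp_const (ℱ.le i)]
          filter_upwards [h3, h4, h5, h6] with ω hω3 hω4 hω5 hω6
          simp only [Pi.add_apply] at *
          rw [hω3]
          simp only [Pi.smul_apply, smul_eq_mul] at *
          rw [hω4, hω5, hω6, h7]
          simp only [Pi.zero_apply]
          ring
        exact h1.trans h2.le
      -- combine
      have hfinal : μ[f (i + 1) | ℱ i] ≤ᵐ[μ] f i := by
        rw [hfsucc]
        refine hpull.trans_le ?_
        filter_upwards [hmgf, hVnonneg (i + 1)] with ω hω hV0
        have hG0 : 0 ≤ G ω := le_of_lt (mul_pos (hfpos i ω) (Real.exp_pos _))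
        calc G ω * (μ[E | ℱ i]) ω ≤ G ω * (1 + φ * V (i + 1) ω) :=
              mul_le_mul_of_nonneg_left hω hG0
        _ ≤ G ω * Real.exp (φ * V (i + 1) ω) :=
              mul_le_mul_of_nonneg_left
              (by linarith [Real.add_one_le_exp (φ * V (i + 1) ω)]) hG0
        _ = f i ω := by
              rw [hGdef]
              rw [mul_assoc, ← Real.exp_add]
              simp
      exact hfinal
    · -- trivial case : f (i+1) = f i
      have hmin : min (i + 1) n = min i n := by omega
      have : f (i + 1) = f i := by
        funext ω; rw [hfdef]; simp only [hmin]
      rw [this, condExp_of_stronglyMeasurable (ℱ.le i) (hfmeas i) (hfint i)]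
  -- the supermartingale
  have hadapted : StronglyAdapted ℱ f := fun i => hfmeas i
  have hsuper : Supermartingale f ℱ μ := supermartingale_nat hadapted hfint hstep
  -- the threshold value
  set c : ℝ := Real.exp (s * lam - φ * ν) with hcdef
  have hc1 : Real.exp t ≤ c := by
    rw [hcdef]
    apply Real.exp_le_exp.mpr
    linarith [hmaster]
  have hcpos : 0 < c := Real.exp_pos _
  -- the maximal set
  set M : Set Ω := {ω | c ≤ (Finset.range (n + 1)).sup' Finset.nonempty_range_add_one
      fun k => f k ω} with hMdef
  have hfMeasm0 : ∀ k : ℕ, Measurable (f k) := fun k =>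
    ((hfmeas k).mono (ℱ.le k)).measurable
  have hMmeas : MeasurableSet M := by
    rw [hMdef]
    exact measurableSet_le measurable_const
      (Finset.measurable_range_sup'' fun k _ => hfMeasm0 k)
  -- event inclusion
  have hincl : μ {ω | ((Icc 1 n).sup' (Finset.nonempty_Icc.mpr hn)
          fun i => ∑ j ∈ Icc 1 i, X j ω) >
            Real.sqrt (2 * ν * t) + Real.sqrt 2 / 3 * K * t ∧
        (∑ s ∈ Icc 1 n, (μ[(fun ω' => (X s ω') ^ 2) | ℱ (s - 1)]) ω) ≤ ν} ≤ μ M := by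
    apply measure_mono_ae
    filter_upwards [hgood] with ω hω
    intro hev
    obtain ⟨hsup, hSig⟩ := hev
    rw [gt_iff_lt, Finset.lt_sup'_iff] at hsup
    obtain ⟨i, hi, hSi⟩ := hsup
    rw [Finset.mem_Icc] at hi
    have hmini : min i n = i := min_eq_left hi.2
    have hQi : (∑ j ∈ Icc 1 (min i n), V j ω) ≤ ν := by
      rw [hmini]
      refine le_trans ?_ hSig
      apply Finset.sum_le_sum_of_subset_of_nonneg
      · exact Finset.Icc_subset_Icc le_rfl hi.2
      · intro j hj _
        rw [Finset.mem_Icc] at hj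
        exact hω.2 j hj.2
    have hfi : c ≤ f i ω := by
      rw [hfdef, hcdef]
      apply Real.exp_le_exp.mpr
      have h1 : s * lam ≤ s * (∑ j ∈ Icc 1 (min i n), X j ω) := by
        apply mul_le_mul_of_nonneg_left _ hs.le
        rw [hmini]
        exact le_of_lt hSi
      have h2 : φ * (∑ j ∈ Icc 1 (min i n), V j ω) ≤ φ * ν :=
        mul_le_mul_of_nonneg_left hQi hφ0
      linarith
    rw [hMdef]
    show c ≤ _
    refine le_trans hfi ?_
    exact Finset.le_sup' (fun k => f k ω) (Finset.mem_range.mpr (by omega))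
  refine le_trans hincl ?_
  -- maximal inequality for the supermartingale via hitting time
  set τ : Ω → WithTop ℕ := fun ω => (hittingBtwn f (Set.Ici c) 0 n ω : ℕ) with hτdef
  have hτst : IsStoppingTime ℱ τ := hadapted.adapted.isStoppingTime_hittingBtwn measurableSet_Ici
  have hτle : ∀ ω, τ ω ≤ n := fun ω => WithTop.coe_le_coe.mpr (hittingBtwn_le ω)
  have hsvint : Integrable (stoppedValue f τ) μ :=
    integrable_stoppedValue ℕ hτst hfint hτle
  have hsv_ge : ∀ ω ∈ M, c ≤ stoppedValue f τ ω := by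
    intro ω hω
    have hω' : c ≤ (Finset.range (n + 1)).sup' Finset.nonempty_range_add_one
        fun k => f k ω := hω
    have : ∃ j ∈ Set.Icc 0 n, f j ω ∈ Set.Ici c := by
      rw [Finset.le_sup'_iff] at hω'
      obtain ⟨k, hk, hck⟩ := hω'
      exact ⟨k, ⟨Nat.zero_le k, Nat.lt_succ_iff.mp (Finset.mem_range.mp hk)⟩, hck⟩
    exact stoppedValue_hittingBtwn_mem this
  have hsv_nonneg : 0 ≤ᵐ[μ] stoppedValue f τ :=
    Filter.Eventually.of_forall fun ω => (hfpos _ ω).le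
  -- E[stoppedValue] ≤ E[f 0] = 1
  have hf0 : f 0 = fun _ => (1:ℝ) := by
    funext ω
    rw [hfdef]
    simp
  have hEsv : ∫ ω, stoppedValue f τ ω ∂μ ≤ 1 := by
    have hneg := hsuper.neg
    have h := hneg.expected_stoppedValue_mono (isStoppingTime_const ℱ 0) hτst
      (fun ω => WithTop.coe_le_coe.mpr (Nat.zero_le _)) hτle
    rw [stoppedValue_const] at h
    have h1 : (∫ ω, stoppedValue (-f) τ ω ∂μ) = -∫ ω, stoppedValue f τ ω ∂μ := by
      have hsv : stoppedValue (-f) τ = -stoppedValue f τ := by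
        funext ω; simp [stoppedValue]
      rw [hsv]
      simp only [Pi.neg_apply]
      rw [integral_neg]
    have h2 : (∫ ω, (-f) 0 ω ∂μ) = -1 := by
      have : (-f) 0 = fun _ => (-1:ℝ) := by
        funext ω; simp [hf0]
      rw [this]
      simp
    rw [h1, h2] at h
    linarith
  -- Markov
  have hmarkov : ENNReal.ofReal c * μ M ≤ 1 := by
    have hμM : μ M ≠ ⊤ := measure_ne_top μ M
    have h1 := setIntegral_ge_of_const_le hMmeas hμM hsv_ge hsvint.integrableOn
    have h2 : ∫ ω in M, stoppedValue f τ ω ∂μ ≤ ∫ ω, stoppedValue f τ ω ∂μ :=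
      setIntegral_le_integral hsvint hsv_nonneg
    have h3 : c * (μ M).toReal ≤ 1 := by rw [smul_eq_mul, measureReal_def] at h1; linarith
    calc ENNReal.ofReal c * μ M = ENNReal.ofReal c * ENNReal.ofReal (μ M).toReal := by
          rw [ENNReal.ofReal_toReal hμM]
    _ = ENNReal.ofReal (c * (μ M).toReal) := by
          rw [ENNReal.ofReal_mul hcpos.le]
    _ ≤ ENNReal.ofReal 1 := ENNReal.ofReal_le_ofReal h3
    _ = 1 := ENNReal.ofReal_one
  have hfinal : μ M ≤ ENNReal.ofReal (Real.exp (-t)) := by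
    have h1 : μ M ≤ (ENNReal.ofReal c)⁻¹ := by
      rw [ENNReal.le_inv_iff_mul_le, mul_comm]
      exact hmarkov
    have h2 : (ENNReal.ofReal c)⁻¹ = ENNReal.ofReal c⁻¹ := by
      rw [ENNReal.ofReal_inv_of_pos hcpos]
    rw [h2] at h1
    refine le_trans h1 (ENNReal.ofReal_le_ofReal ?_)
    rw [Real.exp_neg]
    apply inv_anti₀ (Real.exp_pos t)
    exact hc1
  exact hfinal
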